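/- The norm squared of the squeezed-coherent state R(η,ξ)|0⟩ involves the normalization κ(r) = ⟨0| S(ξ)† S(ξ) |0⟩ = ₃F₀(1/2, -N/2, (1-N)/2; ; 4r²) = Σ_{i=0}^{⌊N/2⌋} (1/2)_i (-N/2)_i ((1-N)/2)_i (4r²)^i / i!, where ξ = re^{iγ} and S(ξ) = e^{ξJ+²/2}e^{-ξ̄J-²/2}. -/

import Mathlib

/-- The su(2) spin-N/2 raising operator on `ℂ^{N+1}`. -/
noncomputable def Jp (N : ℕ) : Matrix (Fin (N + 1)) (Fin (N + 1)) ℂ :=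
  Matrix.of fun i j : Fin (N + 1) =>
    if (i : ℕ) = (j : ℕ) + 1 then (Real.sqrt (((j : ℕ) + 1) * (N - (j : ℕ))) : ℂ) else 0

/-- The su(2) spin-N/2 lowering operator on `ℂ^{N+1}`. -/
noncomputable def Jm (N : ℕ) : Matrix (Fin (N + 1)) (Fin (N + 1)) ℂ :=
  Matrix.of fun i j : Fin (N + 1) =>
    if (i : ℕ) + 1 = (j : ℕ) then (Real.sqrt ((j : ℕ) * (N - (j : ℕ) + 1)) : ℂ) else 0

/-- The su(2) spin-N/2 diagonal generator on `ℂ^{N+1}`. -/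
noncomputable def J3 (N : ℕ) : Matrix (Fin (N + 1)) (Fin (N + 1)) ℂ :=
  Matrix.diagonal fun k : Fin (N + 1) => ((k : ℕ) : ℂ) - (N : ℂ) / 2

/- ### Auxiliary lemmas -/

/-- exp of a nilpotent matrix is a finite sum. -/
lemma exp_nilp_eq_sum {n : Type*} [Fintype n] [DecidableEq n]
    (M : Matrix n n ℂ) (k : ℕ) (h : M ^ k = 0) :
    NormedSpace.exp M = ∑ i ∈ Finset.range k, ((Nat.factorial i : ℂ))⁻¹ • M ^ i := by
  rw [NormedSpace.exp_eq_tsum ℂ]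
  refine tsum_eq_sum fun b hb => ?_
  have hb' : k ≤ b := by simpa using hb
  have : M ^ b = 0 := by
    calc M ^ b = M ^ k * M ^ (b - k) := by rw [← pow_add]; congr 1; omega
    _ = 0 := by rw [h, Matrix.zero_mul]
  simp [this]

lemma shift_pow_apply {N : ℕ} (M : Matrix (Fin (N + 1)) (Fin (N + 1)) ℂ)
    (h : ∀ i j : Fin (N + 1), (i : ℕ) ≠ (j : ℕ) + 1 → M i j = 0) (m : ℕ) :
    ∀ i j : Fin (N + 1), (i : ℕ) ≠ (j : ℕ) + m → (M ^ m) i j = 0 := by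
  induction m with
  | zero =>
    intro i j hij
    rw [pow_zero, Matrix.one_apply_ne (by intro hij'; apply hij; rw [hij']; omega)]
  | succ m ih =>
    intro i j hij
    rw [pow_succ', Matrix.mul_apply]
    refine Finset.sum_eq_zero fun k _ => ?_
    by_cases hk : (k : ℕ) = (j : ℕ) + m
    · rw [h i k (by omega), zero_mul]
    · rw [ih k j hk, mul_zero]

lemma shift_pow_zero {N : ℕ} (M : Matrix (Fin (N + 1)) (Fin (N + 1)) ℂ)
    (h : ∀ i j : Fin (N + 1), (i : ℕ) ≠ (j : ℕ) + 1 → M i j = 0) :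
    M ^ (N + 1) = 0 := by
  ext i j
  rw [shift_pow_apply M h (N + 1) i j (by omega), Matrix.zero_apply]

lemma Jp_pow_nilp (N : ℕ) : (Jp N) ^ (N + 1) = 0 := by
  refine shift_pow_zero _ fun i j hij => ?_
  simp only [Jp, Matrix.of_apply, if_neg hij]

lemma Jm_pow_nilp (N : ℕ) : (Jm N) ^ (N + 1) = 0 := by
  have h : (Matrix.transpose (Jm N)) ^ (N + 1) = 0 := by
    refine shift_pow_zero _ fun i j hij => ?_
    simp only [Jm, Matrix.transpose_apply, Matrix.of_apply]
    rw [if_neg (by omega)]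
  have := congrArg Matrix.transpose h
  rwa [← Matrix.transpose_pow, Matrix.transpose_transpose, Matrix.transpose_zero] at this

lemma smul_sq_nilp {N : ℕ} (c : ℂ) (M : Matrix (Fin (N + 1)) (Fin (N + 1)) ℂ)
    (h : M ^ (N + 1) = 0) : (c • M ^ 2) ^ (N + 1) = 0 := by
  rw [smul_pow, ← pow_mul]
  have : M ^ (2 * (N + 1)) = 0 := by
    rw [two_mul, pow_add, h, Matrix.zero_mul]
  rw [this, smul_zero]

/-- product of the raising-matrix entries -/
noncomputable def pfun (N : ℕ) : ℕ → ℝ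
  | 0 => 1
  | n + 1 => Real.sqrt (((n : ℝ) + 1) * ((N : ℝ) - n)) * pfun N n

noncomputable def qfun (N : ℕ) : ℕ → ℝ
  | 0 => 1
  | n + 1 => (((n : ℝ) + 1) * ((N : ℝ) - n)) * qfun N n

lemma pfun_sq {N : ℕ} : ∀ n : ℕ, n ≤ N → pfun N n ^ 2 = qfun N n := by
  intro n
  induction n with
  | zero => intro _; simp [pfun, qfun]
  | succ n ih =>
    intro hn
    have h1 : (0 : ℝ) ≤ ((n : ℝ) + 1) * ((N : ℝ) - n) := by
      have : (n : ℝ) + 1 ≤ (N : ℝ) := by exact_mod_cast hn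
      nlinarith [Nat.cast_nonneg (α := ℝ) n]
    rw [pfun, qfun, mul_pow, Real.sq_sqrt h1, ih (by omega)]

lemma Jp_pow_apply (N : ℕ) (m : ℕ) (j : Fin (N + 1)) :
    ((Jp N) ^ m) j 0 = if (j : ℕ) = m then ((pfun N m : ℝ) : ℂ) else 0 := by
  induction m generalizing j with
  | zero =>
    rw [pow_zero, Matrix.one_apply]
    rw [pfun, Complex.ofReal_one]
    exact if_congr (Fin.ext_iff.trans (by simp)) rfl rfl
  | succ m ih =>
    rw [pow_succ', Matrix.mul_apply]
    by_cases hm : m ≤ N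
    · have hsum : ∀ k : Fin (N + 1), k ∈ Finset.univ →
          k ≠ (⟨m, by omega⟩ : Fin (N + 1)) → Jp N j k * ((Jp N) ^ m) k 0 = 0 := by
        intro k _ hk
        rw [ih k, if_neg (by simpa [Fin.ext_iff] using hk), mul_zero]
      rw [Finset.sum_eq_single_of_mem _ (Finset.mem_univ _) hsum, ih, if_pos rfl]
      show Jp N j ⟨m, _⟩ * _ = _
      simp only [Jp, Matrix.of_apply, pfun]
      by_cases hj : (j : ℕ) = m + 1
      · rw [if_pos hj, if_pos hj]
        push_cast
        ring
      · rw [if_neg hj, if_neg hj, zero_mul]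
    · have hz : ∀ k : Fin (N + 1), k ∈ Finset.univ →
          Jp N j k * ((Jp N) ^ m) k 0 = 0 := by
        intro k _
        rw [ih k, if_neg (by omega), mul_zero]
      rw [Finset.sum_eq_zero hz, if_neg (by omega)]

lemma Jm_sq_pow_col (N : ℕ) : ∀ i : ℕ, 1 ≤ i → ∀ j : Fin (N + 1),
    (((Jm N) ^ 2) ^ i) j 0 = 0 := by
  have base : ∀ j : Fin (N + 1), ((Jm N) ^ 2) j 0 = 0 := by
    intro j
    rw [pow_two, Matrix.mul_apply]
    refine Finset.sum_eq_zero fun k _ => ?_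
    have : Jm N k 0 = 0 := by
      simp only [Jm, Matrix.of_apply]
      rw [if_neg (by simp)]
    rw [this, mul_zero]
  intro i hi j
  obtain ⟨i', rfl⟩ : ∃ i', i = i' + 1 := ⟨i - 1, by omega⟩
  rw [pow_succ, Matrix.mul_apply]
  exact Finset.sum_eq_zero fun k _ => by rw [base k, mul_zero]

lemma sum_even_reindex (n : ℕ) (F : ℕ → ℂ) :
    ∑ k ∈ Finset.range (n + 1), (if k % 2 = 0 then F k else 0)
      = ∑ m ∈ Finset.range (n / 2 + 1), F (2 * m) := by
  rw [← Finset.sum_filter]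
  refine Finset.sum_nbij' (fun k => k / 2) (fun m => 2 * m) ?_ ?_ ?_ ?_ ?_
  · intro k hk
    simp only [Finset.mem_filter, Finset.mem_range] at hk ⊢
    omega
  · intro m hm
    simp only [Finset.mem_filter, Finset.mem_range] at hm ⊢
    omega
  · intro k hk
    simp only [Finset.mem_filter, Finset.mem_range] at hk
    omega
  · intro m _
    omega
  · intro k hk
    simp only [Finset.mem_filter, Finset.mem_range] at hk
    congr 1
    omega

lemma qfun_poch (N : ℕ) : ∀ m : ℕ,
    qfun N (2 * m) = (ascPochhammer ℝ m).eval (1 / 2 : ℝ) *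
      (ascPochhammer ℝ m).eval (-(N : ℝ) / 2) *
      (ascPochhammer ℝ m).eval ((1 - (N : ℝ)) / 2) * 16 ^ m * (Nat.factorial m) := by
  intro m
  induction m with
  | zero => simp [qfun]
  | succ m ih =>
    have h2 : 2 * (m + 1) = (2 * m + 1) + 1 := by ring
    rw [h2, qfun, qfun, ih, ascPochhammer_succ_eval, ascPochhammer_succ_eval,
      ascPochhammer_succ_eval, Nat.factorial_succ]
    push_cast
    ring

open Nat Matrix in
/-- The squeezed-vacuum normalization:
`κ(r) = ⟨0|S(ξ)†S(ξ)|0⟩ = ₃F₀(1/2, -N/2, (1-N)/2 ;; 4r²)` with `ξ = r e^{iγ}`. -/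
theorem squeeze_vacuum_norm (N : ℕ) (r γ : ℝ) :
    ((NormedSpace.exp (((r : ℂ) * Complex.exp (Complex.I * γ) / 2) • (Jp N) ^ 2) *
          NormedSpace.exp
            ((-(starRingEnd ℂ) ((r : ℂ) * Complex.exp (Complex.I * γ)) / 2) •
              (Jm N) ^ 2))ᴴ *
        (NormedSpace.exp (((r : ℂ) * Complex.exp (Complex.I * γ) / 2) • (Jp N) ^ 2) *
          NormedSpace.exp
            ((-(starRingEnd ℂ) ((r : ℂ) * Complex.exp (Complex.I * γ)) / 2) •
              (Jm N) ^ 2))) 0 0 =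
      ((∑ i ∈ Finset.range (N / 2 + 1),
          (ascPochhammer ℝ i).eval (1 / 2 : ℝ) * (ascPochhammer ℝ i).eval (-(N : ℝ) / 2) *
            (ascPochhammer ℝ i).eval ((1 - (N : ℝ)) / 2) * (4 * r ^ 2) ^ i / (i ! : ℝ) : ℝ) :
        ℂ) := by
  set c : ℂ := (r : ℂ) * Complex.exp (Complex.I * γ) / 2 with hc
  set d : ℂ := -(starRingEnd ℂ) ((r : ℂ) * Complex.exp (Complex.I * γ)) / 2 with hd
  set A := NormedSpace.exp (c • (Jp N) ^ 2) with hA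
  set B := NormedSpace.exp (d • (Jm N) ^ 2) with hB
  -- expansions
  have hAexp : A = ∑ i ∈ Finset.range (N + 1), ((Nat.factorial i : ℂ))⁻¹ • (c • (Jp N) ^ 2) ^ i :=
    exp_nilp_eq_sum _ _ (smul_sq_nilp c _ (Jp_pow_nilp N))
  have hBexp : B = ∑ i ∈ Finset.range (N + 1), ((Nat.factorial i : ℂ))⁻¹ • (d • (Jm N) ^ 2) ^ i :=
    exp_nilp_eq_sum _ _ (smul_sq_nilp d _ (Jm_pow_nilp N))
  -- column 0 of B is e₀
  have hBcol : ∀ j : Fin (N + 1), B j 0 = if j = 0 then 1 else 0 := by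
    intro j
    rw [hBexp, Matrix.sum_apply]
    have h0 : (0 : ℕ) ∈ Finset.range (N + 1) := by simp
    rw [Finset.sum_eq_single_of_mem 0 h0 ?_]
    · simp [Matrix.one_apply]
    · intro i _ hi
      rw [Matrix.smul_apply, smul_pow, Matrix.smul_apply,
        Jm_sq_pow_col N i (by omega) j]
      simp
  -- column 0 of A * B equals column 0 of A
  have hABcol : ∀ k : Fin (N + 1), (A * B) k 0 = A k 0 := by
    intro k
    rw [Matrix.mul_apply]
    rw [Finset.sum_eq_single_of_mem 0 (Finset.mem_univ _) ?_]
    · rw [hBcol, if_pos rfl, mul_one]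
    · intro j _ hj
      rw [hBcol, if_neg hj, mul_zero]
  -- column 0 of A
  have hAcol : ∀ k : Fin (N + 1), A k 0 =
      if (k : ℕ) % 2 = 0 then
        ((Nat.factorial ((k : ℕ) / 2) : ℂ))⁻¹ * c ^ ((k : ℕ) / 2) *
          ((pfun N (2 * ((k : ℕ) / 2)) : ℝ) : ℂ)
      else 0 := by
    intro k
    rw [hAexp, Matrix.sum_apply]
    have hterm : ∀ i : ℕ, (((Nat.factorial i : ℂ))⁻¹ • (c • (Jp N) ^ 2) ^ i) k 0 =
        if (k : ℕ) = 2 * i then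
          ((Nat.factorial i : ℂ))⁻¹ * c ^ i * ((pfun N (2 * i) : ℝ) : ℂ) else 0 := by
      intro i
      rw [smul_pow, ← pow_mul, Matrix.smul_apply, Matrix.smul_apply, Jp_pow_apply]
      by_cases hki : (k : ℕ) = 2 * i
      · rw [if_pos hki, if_pos hki, smul_eq_mul, smul_eq_mul]; ring
      · rw [if_neg hki, if_neg hki, smul_zero, smul_zero]
    simp only [hterm]
    by_cases hk : (k : ℕ) % 2 = 0
    · have hmem : (k : ℕ) / 2 ∈ Finset.range (N + 1) := by
        have := k.isLt; simp only [Finset.mem_range]; omega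
      rw [Finset.sum_eq_single_of_mem ((k : ℕ) / 2) hmem ?_, if_pos (by omega), if_pos hk]
      intro i _ hi
      rw [if_neg (by omega)]
    · rw [if_neg hk]
      refine Finset.sum_eq_zero fun i _ => ?_
      rw [if_neg (by omega)]
  -- |c|² = r²/4
  have hcc : (starRingEnd ℂ) c * c = (r : ℂ) ^ 2 / 4 := by
    have hexp : Complex.exp (-(Complex.I * (γ : ℂ))) * Complex.exp (Complex.I * (γ : ℂ)) = 1 := by
      rw [← Complex.exp_add]; simp
    have h1 : (starRingEnd ℂ) c = (r : ℂ) * Complex.exp (-(Complex.I * (γ : ℂ))) / 2 := by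
      rw [hc, map_div₀, _root_.map_mul, Complex.conj_ofReal, ← Complex.exp_conj]
      have hI : (starRingEnd ℂ) (Complex.I * (γ : ℂ)) = -(Complex.I * (γ : ℂ)) := by
        rw [_root_.map_mul, Complex.conj_I, Complex.conj_ofReal]; ring
      rw [hI]
      congr 1
      exact Complex.conj_ofNat 2
    rw [h1, hc]
    linear_combination ((r : ℂ) ^ 2 / 4) * hexp
  -- main computation
  rw [Matrix.mul_apply]
  simp only [Matrix.conjTranspose_apply, hABcol]
  have hsummand : ∀ k : Fin (N + 1),
      star (A k 0) * A k 0 =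
        if (k : ℕ) % 2 = 0 then
          ((((Nat.factorial ((k : ℕ) / 2) : ℝ))⁻¹ * ((Nat.factorial ((k : ℕ) / 2) : ℝ))⁻¹ *
            (r ^ 2 / 4) ^ ((k : ℕ) / 2) * (pfun N (2 * ((k : ℕ) / 2))) ^ 2 : ℝ) : ℂ)
        else 0 := by
    intro k
    rw [hAcol k]
    by_cases hk : (k : ℕ) % 2 = 0
    · rw [if_pos hk, if_pos hk]
      have h3 : star (c ^ ((k : ℕ) / 2)) * c ^ ((k : ℕ) / 2) =
          ((r : ℂ) ^ 2 / 4) ^ ((k : ℕ) / 2) := by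
        rw [star_pow, ← mul_pow]
        rw [show (star c) = (starRingEnd ℂ) c from rfl, hcc]
      rw [star_mul', star_mul', star_pow]
      have h1 : star (((pfun N (2 * ((k : ℕ) / 2)) : ℝ) : ℂ)) =
          ((pfun N (2 * ((k : ℕ) / 2)) : ℝ) : ℂ) := by
        rw [RCLike.star_def, Complex.conj_ofReal]
      have h2 : star (((Nat.factorial ((k : ℕ) / 2) : ℂ))⁻¹) =
          ((Nat.factorial ((k : ℕ) / 2) : ℂ))⁻¹ := by
        rw [star_inv₀, star_natCast]
      rw [h1, h2, ← star_pow]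
      push_cast
      linear_combination (((Nat.factorial ((k : ℕ) / 2) : ℂ))⁻¹ *
        ((Nat.factorial ((k : ℕ) / 2) : ℂ))⁻¹ *
        ((pfun N (2 * ((k : ℕ) / 2)) : ℝ) : ℂ) * ((pfun N (2 * ((k : ℕ) / 2)) : ℝ) : ℂ)) * h3
    · rw [if_neg hk, if_neg hk, star_zero, zero_mul]
  have hmain : ∑ k : Fin (N + 1), star (A k 0) * A k 0
      = ∑ k ∈ Finset.range (N + 1), (if k % 2 = 0 then
          ((((Nat.factorial (k / 2) : ℝ))⁻¹ * ((Nat.factorial (k / 2) : ℝ))⁻¹ *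
            (r ^ 2 / 4) ^ (k / 2) * (pfun N (2 * (k / 2))) ^ 2 : ℝ) : ℂ)
        else 0) := by
    rw [← Fin.sum_univ_eq_sum_range]
    exact Finset.sum_congr rfl fun k _ => hsummand k
  rw [hmain, sum_even_reindex, Complex.ofReal_sum]
  refine Finset.sum_congr rfl fun m hm => ?_
  have hm' : 2 * m ≤ N := by
    simp only [Finset.mem_range] at hm
    omega
  have hdiv : 2 * m / 2 = m := by omega
  rw [hdiv, pfun_sq (2 * m) hm', qfun_poch N m]
  rw [Complex.ofReal_inj]
  have hf : (Nat.factorial m : ℝ) ≠ 0 := Nat.cast_ne_zero.mpr (Nat.factorial_ne_zero m)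
  have h16 : (16 : ℝ) ^ m = 4 ^ m * 4 ^ m := by rw [← mul_pow]; norm_num
  have h4r : ((4 : ℝ) * r ^ 2) ^ m = 4 ^ m * (r ^ 2) ^ m := by rw [mul_pow]
  have hr4 : ((r : ℝ) ^ 2 / 4) ^ m = (r ^ 2) ^ m / 4 ^ m := by rw [div_pow]
  rw [h16, h4r, hr4]
  have h4 : (4 : ℝ) ^ m ≠ 0 := by positivity
  field_simp
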